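/- Let (F_i)_{i=0,…,m} be a filtration on a probability space, and let d_1, …, d_m be random variables such that each d_i is F_i-measurable, E(d_i | F_{i−1}) = 0 almost surely, |d_i| ≤ a almost surely for some constant a > 0, and E(d_i² | F_{i−1}) ≤ σ_i² almost surely for constants σ_1, …, σ_m ≥ 0. Then for every real λ with |λ| ≤ 1, E exp( λ ∑_{i=1}^m d_i ) ≤ exp( c λ² ∑_{i=1}^m σ_i² ), where c = e^a / 2. -/

import Mathlib

open MeasureTheory Real

lemma exp_le_quadratic {a x : ℝ} (ha : 0 < a) (hx : |x| ≤ a) :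
    Real.exp x ≤ 1 + x + (Real.exp a / 2) * x ^ 2 := by
  obtain ⟨hx1, hx2⟩ := abs_le.mp hx
  set c := Real.exp a / 2 with hc
  set f : ℝ → ℝ := fun y => 1 + y + c * y ^ 2 - Real.exp y with hfdef
  have hderiv : ∀ y : ℝ, HasDerivAt f (1 + Real.exp a * y - Real.exp y) y := by
    intro y
    have h1 : HasDerivAt (fun y : ℝ => 1 + y + c * y ^ 2) (1 + Real.exp a * y) y := by
      have h2 := (((hasDerivAt_id y).const_add (1 : ℝ)).add
        ((hasDerivAt_pow 2 y).const_mul c))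
      refine h2.congr_deriv ?_
      simp [hc]; ring
    exact h1.sub (Real.hasDerivAt_exp y)
  have hcont : Continuous f := by fun_prop
  have hf0 : f 0 = 0 := by simp [hfdef]
  have key : 0 ≤ f x := by
    rcases le_total 0 x with h0 | h0
    · have hmono : MonotoneOn f (Set.Icc 0 a) := by
        refine monotoneOn_of_hasDerivWithinAt_nonneg (convex_Icc 0 a) hcont.continuousOn
          (fun y _ => (hderiv y).hasDerivWithinAt) (fun y hy => ?_)
        rw [interior_Icc] at hy
        have h3 : 1 - y ≤ Real.exp (-y) := by
          have := Real.add_one_le_exp (-y); linarith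
        have h4 : (1 - y) * Real.exp y ≤ 1 := by
          calc (1 - y) * Real.exp y ≤ Real.exp (-y) * Real.exp y :=
                mul_le_mul_of_nonneg_right h3 (Real.exp_pos y).le
            _ = 1 := by rw [← Real.exp_add]; simp
        have h5 : y * Real.exp y ≤ y * Real.exp a :=
          mul_le_mul_of_nonneg_left (Real.exp_le_exp.mpr hy.2.le) hy.1.le
        nlinarith
      have := hmono (Set.mem_Icc.mpr ⟨le_refl 0, ha.le⟩) (Set.mem_Icc.mpr ⟨h0, hx2⟩) h0
      linarith [hf0 ▸ this]
    · have hanti : AntitoneOn f (Set.Icc (-a) 0) := by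
        refine antitoneOn_of_hasDerivWithinAt_nonpos (convex_Icc (-a) 0) hcont.continuousOn
          (fun y _ => (hderiv y).hasDerivWithinAt) (fun y hy => ?_)
        rw [interior_Icc] at hy
        have h3 := Real.add_one_le_exp y
        have h4 : (Real.exp a - 1) * (-y) ≥ 0 :=
          mul_nonneg (sub_nonneg.mpr (Real.one_le_exp ha.le)) (by linarith [hy.2])
        nlinarith
      have := hanti (Set.mem_Icc.mpr ⟨hx1, h0⟩) (Set.mem_Icc.mpr ⟨neg_nonpos_of_nonneg ha.le, le_refl 0⟩) h0
      linarith [hf0 ▸ this]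
  simp only [hfdef] at key
  linarith

lemma condexp_exp_le {Ω : Type*} [m0 : MeasurableSpace Ω] (P : Measure Ω)
    [IsProbabilityMeasure P] {G : MeasurableSpace Ω} (hG : G ≤ m0) {d : Ω → ℝ}
    {a s2 lam : ℝ} (ha : 0 < a)
    (hd_int : Integrable d P) (hd_ce : P[d|G] =ᵐ[P] fun _ => (0 : ℝ))
    (hd_bdd : ∀ᵐ ω ∂P, |d ω| ≤ a)
    (hd_var : P[fun ω => d ω ^ 2|G] ≤ᵐ[P] fun _ => s2)
    (hlam : |lam| ≤ 1) :
    P[fun ω => Real.exp (lam * d ω)|G] ≤ᵐ[P]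
      fun _ => Real.exp (Real.exp a / 2 * lam ^ 2 * s2) := by
  set c := Real.exp a / 2 with hcdef
  have hc : 0 ≤ c := by positivity
  have hdm := hd_int.aestronglyMeasurable
  have h_lamd : ∀ᵐ ω ∂P, |lam * d ω| ≤ a := by
    filter_upwards [hd_bdd] with ω h
    calc |lam * d ω| = |lam| * |d ω| := abs_mul _ _
      _ ≤ 1 * a := mul_le_mul hlam h (abs_nonneg _) zero_le_one
      _ = a := one_mul a
  have hexp_int : Integrable (fun ω => Real.exp (lam * d ω)) P := by
    refine Integrable.mono' (integrable_const (Real.exp a))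
      (Real.continuous_exp.comp_aestronglyMeasurable (hdm.const_mul lam)) ?_
    filter_upwards [h_lamd] with ω h
    rw [Real.norm_eq_abs, Real.abs_exp]
    exact Real.exp_le_exp.mpr (le_trans (le_abs_self _) h)
  have hd2_int : Integrable (fun ω => d ω ^ 2) P := by
    refine Integrable.mono' (integrable_const (a ^ 2)) ?_ ?_
    · exact hdm.pow 2
    · filter_upwards [hd_bdd] with ω h
      rw [Real.norm_eq_abs, abs_pow]
      exact pow_le_pow_left₀ (abs_nonneg _) h 2
  have hg1 : Integrable (fun ω => lam * d ω) P := hd_int.const_mul lam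
  have hg2 : Integrable (fun ω => c * lam ^ 2 * d ω ^ 2) P := hd2_int.const_mul _
  set g : Ω → ℝ := ((fun _ => (1 : ℝ)) + fun ω => lam * d ω) + fun ω => c * lam ^ 2 * d ω ^ 2
    with hgdef
  have hg_int : Integrable g P := ((integrable_const 1).add hg1).add hg2
  have hle : (fun ω => Real.exp (lam * d ω)) ≤ᵐ[P] g := by
    filter_upwards [h_lamd] with ω h
    have h2 := exp_le_quadratic ha h
    simp only [hgdef, Pi.add_apply]
    calc Real.exp (lam * d ω) ≤ 1 + lam * d ω + c * (lam * d ω) ^ 2 := h2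
      _ = 1 + lam * d ω + c * lam ^ 2 * d ω ^ 2 := by ring
  have hmono := condExp_mono (m := G) hexp_int hg_int hle
  have hsplit : P[g|G] =ᵐ[P]
      (P[(fun _ => (1 : ℝ)) + fun ω => lam * d ω|G]) + P[fun ω => c * lam ^ 2 * d ω ^ 2|G] :=
    condExp_add ((integrable_const 1).add hg1) hg2 G
  have hsplit2 : P[(fun _ => (1 : ℝ)) + fun ω => lam * d ω|G] =ᵐ[P]
      (P[fun _ => (1 : ℝ)|G]) + P[fun ω => lam * d ω|G] :=
    condExp_add (integrable_const 1) hg1 G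
  have hconst : P[fun _ => (1 : ℝ)|G] = fun _ => (1 : ℝ) := condExp_const hG 1
  have hsm : P[fun ω => lam * d ω|G] =ᵐ[P] fun ω => lam * (P[d|G]) ω := by
    have := condExp_smul (μ := P) (m := G) lam d
    exact this
  have hsm2 : P[fun ω => c * lam ^ 2 * d ω ^ 2|G] =ᵐ[P]
      fun ω => c * lam ^ 2 * (P[fun ω => d ω ^ 2|G]) ω := by
    have := condExp_smul (μ := P) (m := G) (c * lam ^ 2) (fun ω => d ω ^ 2)
    exact this
  filter_upwards [hmono, hsplit, hsplit2, hsm, hsm2, hd_ce, hd_var] with ω h1 h2 h3 h4 h5 h6 h7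
  have hval : (P[g|G]) ω = 1 + c * lam ^ 2 * (P[fun ω => d ω ^ 2|G]) ω := by
    rw [h2, Pi.add_apply, h3, Pi.add_apply, hconst, h4, h5, h6]
    ring
  have h8 : c * lam ^ 2 * (P[fun ω => d ω ^ 2|G]) ω ≤ c * lam ^ 2 * s2 :=
    mul_le_mul_of_nonneg_left h7 (by positivity)
  have h9 : 1 + c * lam ^ 2 * s2 ≤ Real.exp (c * lam ^ 2 * s2) := by
    linarith [Real.add_one_le_exp (c * lam ^ 2 * s2)]
  calc (P[fun ω => Real.exp (lam * d ω)|G]) ω ≤ (P[g|G]) ω := h1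
    _ = 1 + c * lam ^ 2 * (P[fun ω => d ω ^ 2|G]) ω := hval
    _ ≤ Real.exp (c * lam ^ 2 * s2) := by linarith

/-- Martingale form of the exponential moment inequality: for a bounded martingale
difference sequence `d_i` with conditional variances bounded by `σ_i²`, and `|λ| ≤ 1`,
`E exp(λ ∑ d_i) ≤ exp((eᵃ/2) λ² ∑ σ_i²)`. -/
theorem exp_moment_bound_martingale
    {Ω : Type*} [m0 : MeasurableSpace Ω] (P : Measure Ω) [IsProbabilityMeasure P]
    (m : ℕ) (F : ℕ → MeasurableSpace Ω)
    (hF_mono : ∀ i j, i ≤ j → j ≤ m → F i ≤ F j)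
    (hF_le : ∀ i, i ≤ m → F i ≤ m0)
    (d : ℕ → Ω → ℝ) (a : ℝ) (ha : 0 < a) (σ : ℕ → ℝ) (hσ : ∀ i, 0 ≤ σ i)
    (hd_meas : ∀ i, 1 ≤ i → i ≤ m → StronglyMeasurable[F i] (d i))
    (hd_int : ∀ i, 1 ≤ i → i ≤ m → Integrable (d i) P)
    (hd_ce : ∀ i, 1 ≤ i → i ≤ m → P[d i | F (i - 1)] =ᵐ[P] fun _ => (0 : ℝ))
    (hd_bdd : ∀ i, 1 ≤ i → i ≤ m → ∀ᵐ ω ∂P, |d i ω| ≤ a)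
    (hd_var : ∀ i, 1 ≤ i → i ≤ m →
      P[fun ω => (d i ω) ^ 2 | F (i - 1)] ≤ᵐ[P] fun _ => (σ i) ^ 2)
    (lam : ℝ) (hlam : |lam| ≤ 1) :
    ∫ ω, Real.exp (lam * ∑ i ∈ Finset.Icc 1 m, d i ω) ∂P
      ≤ Real.exp ((Real.exp a / 2) * lam ^ 2 * ∑ i ∈ Finset.Icc 1 m, (σ i) ^ 2) := by
  set c := Real.exp a / 2 with hcdef
  -- a.e. bound for all the d i simultaneously
  have hbd_all : ∀ᵐ ω ∂P, ∀ i, 1 ≤ i → i ≤ m → |d i ω| ≤ a := by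
    refine ae_all_iff.mpr fun i => ?_
    by_cases h : 1 ≤ i ∧ i ≤ m
    · filter_upwards [hd_bdd i h.1 h.2] with ω hω _ _; exact hω
    · exact Filter.Eventually.of_forall fun ω h1 h2 => absurd ⟨h1, h2⟩ h
  suffices H : ∀ n, n ≤ m → ∫ ω, Real.exp (lam * ∑ i ∈ Finset.Icc 1 n, d i ω) ∂P
      ≤ Real.exp (c * lam ^ 2 * ∑ i ∈ Finset.Icc 1 n, (σ i) ^ 2) from H m le_rfl
  intro n
  induction n with
  | zero =>
    intro _
    have h0 : Finset.Icc 1 0 = (∅ : Finset ℕ) := by decide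
    simp [h0]
  | succ n ih =>
    intro hn1
    have hn : n ≤ m := Nat.le_of_succ_le hn1
    have h1n1 : 1 ≤ n + 1 := Nat.succ_le_succ (Nat.zero_le n)
    set S : Ω → ℝ := fun ω => ∑ i ∈ Finset.Icc 1 n, d i ω with hSdef
    set X : Ω → ℝ := fun ω => Real.exp (lam * S ω) with hXdef
    set Y : Ω → ℝ := fun ω => Real.exp (lam * d (n + 1) ω) with hYdef
    -- measurability
    have hSmeas : StronglyMeasurable[F n] S := by
      refine Finset.stronglyMeasurable_fun_sum _ fun i hi => ?_
      rw [Finset.mem_Icc] at hi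
      exact (hd_meas i hi.1 (hi.2.trans hn)).mono (hF_mono i n hi.2 hn)
    have hXmeas : StronglyMeasurable[F n] X :=
      Real.continuous_exp.comp_stronglyMeasurable (hSmeas.const_mul lam)
    have hXaesm : AEStronglyMeasurable X P :=
      (hXmeas.mono (hF_le n hn)).aestronglyMeasurable
    have hYaesm : AEStronglyMeasurable Y P :=
      Real.continuous_exp.comp_aestronglyMeasurable
        (((hd_int (n + 1) h1n1 hn1).aestronglyMeasurable).const_mul lam)
    -- a.e. bounds
    have hSbd : ∀ᵐ ω ∂P, |S ω| ≤ n * a := by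
      filter_upwards [hbd_all] with ω h
      calc |S ω| ≤ ∑ i ∈ Finset.Icc 1 n, |d i ω| := Finset.abs_sum_le_sum_abs _ _
        _ ≤ ∑ _i ∈ Finset.Icc 1 n, a := by
            refine Finset.sum_le_sum fun i hi => ?_
            rw [Finset.mem_Icc] at hi
            exact h i hi.1 (hi.2.trans hn)
        _ = n * a := by rw [Finset.sum_const, Nat.card_Icc]; simp
    have hXbd : ∀ᵐ ω ∂P, ‖X ω‖ ≤ Real.exp (n * a) := by
      filter_upwards [hSbd] with ω h
      rw [Real.norm_eq_abs, hXdef, Real.abs_exp]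
      refine Real.exp_le_exp.mpr ?_
      calc lam * S ω ≤ |lam * S ω| := le_abs_self _
        _ = |lam| * |S ω| := abs_mul _ _
        _ ≤ 1 * (n * a) := mul_le_mul hlam h (abs_nonneg _) zero_le_one
        _ = n * a := one_mul _
    have hYbd : ∀ᵐ ω ∂P, ‖Y ω‖ ≤ Real.exp a := by
      filter_upwards [hd_bdd (n + 1) h1n1 hn1] with ω h
      rw [Real.norm_eq_abs, hYdef, Real.abs_exp]
      refine Real.exp_le_exp.mpr ?_
      calc lam * d (n + 1) ω ≤ |lam * d (n + 1) ω| := le_abs_self _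
        _ = |lam| * |d (n + 1) ω| := abs_mul _ _
        _ ≤ 1 * a := mul_le_mul hlam h (abs_nonneg _) zero_le_one
        _ = a := one_mul _
    have hX_int : Integrable X P :=
      Integrable.mono' (integrable_const (Real.exp (n * a))) hXaesm hXbd
    have hY_int : Integrable Y P :=
      Integrable.mono' (integrable_const (Real.exp a)) hYaesm hYbd
    have hXY_int : Integrable (X * Y) P := by
      refine Integrable.mono' (integrable_const (Real.exp (n * a) * Real.exp a))
        (hXaesm.mul hYaesm) ?_
      filter_upwards [hXbd, hYbd] with ω h1 h2
      rw [Pi.mul_apply, norm_mul]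
      exact mul_le_mul h1 h2 (norm_nonneg _) (Real.exp_pos _).le
    -- key conditional bound
    have hce : P[d (n + 1)|F n] =ᵐ[P] fun _ => (0 : ℝ) := hd_ce (n + 1) h1n1 hn1
    have hvar : P[fun ω => d (n + 1) ω ^ 2|F n] ≤ᵐ[P] fun _ => σ (n + 1) ^ 2 :=
      hd_var (n + 1) h1n1 hn1
    have hkey : P[Y|F n] ≤ᵐ[P] fun _ => Real.exp (c * lam ^ 2 * σ (n + 1) ^ 2) :=
      condexp_exp_le P (hF_le n hn) ha (hd_int (n + 1) h1n1 hn1) hce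
        (hd_bdd (n + 1) h1n1 hn1) hvar hlam
    have hpull : P[X * Y|F n] =ᵐ[P] X * P[Y|F n] :=
      condExp_mul_of_stronglyMeasurable_left hXmeas hXY_int hY_int
    set K := Real.exp (c * lam ^ 2 * σ (n + 1) ^ 2) with hKdef
    have hXcond_int : Integrable (X * P[Y|F n]) P :=
      (integrable_condExp (f := X * Y) (m := F n)).congr hpull
    calc ∫ ω, Real.exp (lam * ∑ i ∈ Finset.Icc 1 (n + 1), d i ω) ∂P
        = ∫ ω, (X * Y) ω ∂P := by
          refine integral_congr_ae (Filter.Eventually.of_forall fun ω => ?_)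
          show Real.exp (lam * ∑ i ∈ Finset.Icc 1 (n + 1), d i ω)
            = Real.exp (lam * S ω) * Real.exp (lam * d (n + 1) ω)
          rw [← Real.exp_add, Finset.sum_Icc_succ_top h1n1]
          congr 1
          simp only [hSdef]
          ring
      _ = ∫ ω, (P[X * Y|F n]) ω ∂P := (integral_condExp (hF_le n hn)).symm
      _ = ∫ ω, (X * P[Y|F n]) ω ∂P := integral_congr_ae hpull
      _ ≤ ∫ ω, X ω * K ∂P := by
          refine integral_mono_ae hXcond_int (hX_int.mul_const K) ?_
          filter_upwards [hkey] with ω h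
          exact mul_le_mul_of_nonneg_left h (Real.exp_pos _).le
      _ = (∫ ω, X ω ∂P) * K := integral_mul_const K X
      _ ≤ Real.exp (c * lam ^ 2 * ∑ i ∈ Finset.Icc 1 n, σ i ^ 2) * K :=
          mul_le_mul_of_nonneg_right (ih hn) (Real.exp_pos _).le
      _ = Real.exp (c * lam ^ 2 * ∑ i ∈ Finset.Icc 1 (n + 1), σ i ^ 2) := by
          rw [hKdef, ← Real.exp_add, Finset.sum_Icc_succ_top h1n1]
          congr 1
          ring
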